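/- In the setting of the inexact LM model decrease lemma: with A ∈ ℝ^{m×n}, ‖A‖ ≤ L₀, μ > 0, H = A Aᵀ + μ I, g = A b, d with residual r = H d + g and ‖r‖ ≤ τ μ ‖d‖ for τ ∈ (0,1/2), and q(d) = (1/2)‖Aᵀ d + b‖², one has q(0) − q(d) ≥ ‖r − g‖² / (2 (L₀² + μ)). -/

import Mathlib

set_option maxHeartbeats 1000000

/-- Model decrease lower bound for the inexact LM step: with `H = A Aᵀ + μ I`,
`g = A b`, residual `r = H d + g` with `‖r‖ ≤ τ μ ‖d‖` for `τ ∈ (0,1/2)`, and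
`q(d) = (1/2)‖Aᵀ d + b‖²`, with `‖A‖ ≤ L₀`, one has `q(0) − q(d) ≥ ‖r − g‖²/(2(L₀² + μ))`. -/
theorem model_decrease_residual_lower (m n : ℕ)
    (A : EuclideanSpace ℝ (Fin n) →L[ℝ] EuclideanSpace ℝ (Fin m))
    (b : EuclideanSpace ℝ (Fin n)) (μ τ : ℝ)
    (L₀ : ℝ) (hA : ‖A‖ ≤ L₀) (hμ : 0 < μ) (hτ : τ ∈ Set.Ioo (0 : ℝ) (1 / 2))
    (H : EuclideanSpace ℝ (Fin m) →L[ℝ] EuclideanSpace ℝ (Fin m))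
    (hH : H = A.comp (ContinuousLinearMap.adjoint A) + μ • ContinuousLinearMap.id ℝ _)
    (g d r : EuclideanSpace ℝ (Fin m))
    (hg : g = A b) (hr : r = H d + g) (hres : ‖r‖ ≤ τ * μ * ‖d‖)
    (q : EuclideanSpace ℝ (Fin m) → ℝ)
    (hq : ∀ u, q u = (1 / 2) * ‖(ContinuousLinearMap.adjoint A) u + b‖ ^ 2) :
    q 0 - q d ≥ ‖r - g‖ ^ 2 / (2 * (L₀ ^ 2 + μ)) := by
  obtain ⟨hτ0, hτ2⟩ := hτ
  set T := ContinuousLinearMap.adjoint A with hT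
  set s := T d with hs
  have hL0 : 0 ≤ L₀ := le_trans (norm_nonneg A) hA
  have hden : (0:ℝ) < L₀ ^ 2 + μ := by positivity
  have hHd : H d = A s + μ • d := by
    rw [hH]; simp [ContinuousLinearMap.add_apply, ContinuousLinearMap.smul_apply]; rfl
  have hrg : r - g = H d := by rw [hr]; abel
  have hAsd : (inner ℝ (A s) d : ℝ) = ‖s‖ ^ 2 := by
    rw [← ContinuousLinearMap.adjoint_inner_right, ← hT, ← hs,
      real_inner_self_eq_norm_sq]
  have hinner : (inner ℝ (H d) d : ℝ) = ‖s‖ ^ 2 + μ * ‖d‖ ^ 2 := by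
    rw [hHd, inner_add_left, real_inner_smul_left, real_inner_self_eq_norm_sq, hAsd]
  have hHdnorm : ‖H d‖ ≤ L₀ * ‖s‖ + μ * ‖d‖ := by
    rw [hHd]
    calc ‖A s + μ • d‖ ≤ ‖A s‖ + ‖μ • d‖ := norm_add_le _ _
    _ ≤ L₀ * ‖s‖ + μ * ‖d‖ := by
        rw [norm_smul, Real.norm_eq_abs, abs_of_pos hμ]
        exact add_le_add (le_trans (A.le_opNorm s)
          (mul_le_mul_of_nonneg_right hA (norm_nonneg s))) le_rfl
  have hkey : ‖H d‖ ^ 2 ≤ (L₀ ^ 2 + μ) * (inner ℝ (H d) d : ℝ) := by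
    rw [hinner]
    have h1 : ‖H d‖ ^ 2 ≤ (L₀ * ‖s‖ + μ * ‖d‖) ^ 2 :=
      pow_le_pow_left₀ (norm_nonneg _) hHdnorm 2
    have h2 : (L₀ * ‖s‖ + μ * ‖d‖) ^ 2 ≤ (L₀ ^ 2 + μ) * (‖s‖ ^ 2 + μ * ‖d‖ ^ 2) := by
      nlinarith [sq_nonneg (L₀ * ‖d‖ - ‖s‖), hμ.le]
    linarith
  have hrd : (inner ℝ r d : ℝ) ≤ τ * μ * ‖d‖ ^ 2 := by
    have := real_inner_le_norm r d
    nlinarith [norm_nonneg d]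
  have hgd : (inner ℝ g d : ℝ) = (inner ℝ s b : ℝ) := by
    rw [hg]
    calc (inner ℝ (A b) d : ℝ) = (inner ℝ b (T d) : ℝ) :=
          (ContinuousLinearMap.adjoint_inner_right A b d).symm
    _ = (inner ℝ s b : ℝ) := real_inner_comm _ _
  have hrd' : (inner ℝ r d : ℝ) = (inner ℝ (H d) d : ℝ) + (inner ℝ s b : ℝ) := by
    rw [hr, inner_add_left, hgd]
  have hq0 : q 0 = (1/2) * ‖b‖ ^ 2 := by rw [hq]; simp
  have hqd : q d = (1/2) * (‖s‖ ^ 2 + 2 * (inner ℝ s b : ℝ) + ‖b‖ ^ 2) := by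
    rw [hq, ← hs, norm_add_sq_real]
  have h3 : τ * μ * ‖d‖ ^ 2 ≤ (1/2) * (μ * ‖d‖ ^ 2) := by
    nlinarith [mul_nonneg hμ.le (sq_nonneg ‖d‖)]
  have hmain : q 0 - q d ≥ (1/2) * (inner ℝ (H d) d : ℝ) := by
    rw [hq0, hqd, hinner]
    linarith [hrd, hrd', hinner]
  rw [hrg, ge_iff_le, div_le_iff₀ (by positivity)]
  have h5 : (L₀ ^ 2 + μ) * (inner ℝ (H d) d : ℝ) ≤ (L₀ ^ 2 + μ) * (2 * (q 0 - q d)) :=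
    mul_le_mul_of_nonneg_left (by linarith) hden.le
  nlinarith [hkey, h5]
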